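/- In a generalised voting game, suppose x_min is an O-minimal action and x_max is an O-maximal action for player i, and singletons of X i are measurable. If (μ i){x_min} = 0 while Pr(O | x_max) − Pr(O | x_min) > 0, then the Shapley–Shubik value Pr(O_IC_i^0) is 0 while the Banzhaf value Pr(O_TC_i^δ) = Pr(O | x_max) − Pr(O | x_min) is positive; in particular the Shapley–Shubik index Pr(O_IC_i^0) and the Banzhaf measure Pr(O_TC_i^δ) are not equal. -/
import Mathlib


open MeasureTheory Function

theorem stmt_14
    {ι : Type*} [Fintype ι] [Nonempty ι] [DecidableEq ι]
    {X : ι → Type*} [∀ j, MeasurableSpace (X j)]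
    (μ : ∀ j, Measure (X j)) [∀ j, IsProbabilityMeasure (μ j)]
    {𝒪 : Type*} [MeasurableSpace 𝒪] [MeasurableSingletonClass 𝒪]
    (W : (∀ j, X j) → 𝒪) (hW : Measurable W)
    (O : 𝒪) (i : ι)
    (x_min : X i)
    (hmin : ∀ ω : ∀ j, X j, W (update ω i x_min) = O →
      ∀ x : X i, W (update ω i x) = O)
    (x_max : X i)
    (hmax : ∀ ω : ∀ j, X j, ∀ x : X i, W (update ω i x) = O →
      W (update ω i x_max) = O)
    [MeasurableSingletonClass (X i)]
    (h0 : μ i {x_min} = 0)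
    (hpos : 0 < Measure.pi μ {ω | W (update ω i x_max) = O} - Measure.pi μ {ω | W (update ω i x_min) = O})
    :
    Measure.pi μ {ω | ω i = x_min ∧ W ω ≠ O ∧ W (update ω i x_max) = O} = 0 ∧
      Measure.pi μ ({ω | W ω ≠ O ∧ W (update ω i x_max) = O} ∪ {ω | W ω = O ∧ W (update ω i x_min) ≠ O}) =
        Measure.pi μ {ω | W (update ω i x_max) = O} - Measure.pi μ {ω | W (update ω i x_min) = O} ∧
      0 < Measure.pi μ ({ω | W ω ≠ O ∧ W (update ω i x_max) = O} ∪ {ω | W ω = O ∧ W (update ω i x_min) ≠ O}) ∧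
      Measure.pi μ {ω | ω i = x_min ∧ W ω ≠ O ∧ W (update ω i x_max) = O} ≠
        Measure.pi μ ({ω | W ω ≠ O ∧ W (update ω i x_max) = O} ∪ {ω | W ω = O ∧ W (update ω i x_min) ≠ O}) := by
  set A : Set (∀ j, X j) := {ω | W (update ω i x_max) = O} with hA
  set B : Set (∀ j, X j) := {ω | W (update ω i x_min) = O} with hB
  -- basic inclusions
  have hBO : ∀ ω, ω ∈ B → W ω = O := fun ω hω => by
    have := hmin ω hω (ω i); rwa [update_eq_self] at this
  have hOA : ∀ ω, W ω = O → ω ∈ A := fun ω hω => by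
    refine hmax ω (ω i) ?_; rwa [update_eq_self]
  have hBA : B ⊆ A := fun ω hω => hOA ω (hBO ω hω)
  -- part 1
  have h1 : Measure.pi μ {ω | ω i = x_min ∧ W ω ≠ O ∧ W (update ω i x_max) = O} = 0 := by
    refine measure_mono_null (fun ω hω => hω.1) ?_
    exact Measure.pi_eval_preimage_null μ h0
  -- the union equals A \ B
  have hU : ({ω | W ω ≠ O ∧ W (update ω i x_max) = O} ∪ {ω | W ω = O ∧ W (update ω i x_min) ≠ O})
      = A \ B := by
    ext ω
    constructor
    · rintro (⟨hne, hA'⟩ | ⟨heq, hne⟩)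
      · exact ⟨hA', fun hωB => hne (hBO ω hωB)⟩
      · exact ⟨hOA ω heq, hne⟩
    · rintro ⟨hA', hnB⟩
      by_cases h : W ω = O
      · exact Or.inr ⟨h, hnB⟩
      · exact Or.inl ⟨h, hA'⟩
  -- measurability of B
  have hBm : MeasurableSet B :=
    (hW.comp (measurable_update_left (a := i))) (measurableSet_singleton O)
  have h2 : Measure.pi μ ({ω | W ω ≠ O ∧ W (update ω i x_max) = O} ∪ {ω | W ω = O ∧ W (update ω i x_min) ≠ O})
      = Measure.pi μ A - Measure.pi μ B := by
    rw [hU, measure_diff hBA hBm.nullMeasurableSet (measure_ne_top _ _)]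
  refine ⟨h1, h2, ?_, ?_⟩
  · rw [h2]; exact hpos
  · rw [h1, h2]; exact fun h => (ne_of_gt hpos) h.symm
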